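/- Let V*_{ps}(ℝ) = {X ∈ ℝ^{(p+s)×p} : det Z ≠ 0} with s = p + 2r and Z = X₀ + iX₁, W = X₂ + iX₃ (blocks X₀, X₁ ∈ ℝ^{p×p}, X₂, X₃ ∈ ℝ^{r×p}). Then the complex-valued components of φ : X ↦ W · Z⁻¹ satisfy τ(φ) = 0 and κ(φ,ψ) = 0 for any two components φ, ψ, where τ and κ are the Euclidean Laplacian-type and conformality operators in the coordinates z_{kl}, w_{kl}. -/

import Mathlib

open Matrix Complex

noncomputable section

/-- complex coordinates `(Z, W) ∈ ℂ^{p×p} × ℂ^{r×p}` on `ℝ^{(p+s)×p}`, `s = p + 2r`. -/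
abbrev CSpace (p r : ℕ) := (Fin p → Fin p → ℂ) × (Fin r → Fin p → ℂ)

def bC (n p : ℕ) (k : Fin n) (l : Fin p) : Fin n → Fin p → ℂ :=
  fun a b => if a = k ∧ b = l then 1 else 0

def eZ (p r : ℕ) (k l : Fin p) : CSpace p r := (bC p p k l, 0)
def eW (p r : ℕ) (k : Fin r) (l : Fin p) : CSpace p r := (0, bC r p k l)

def wd (p r : ℕ) (f : CSpace p r → ℂ) (x v : CSpace p r) : ℂ :=
  (fderiv ℝ f x v - Complex.I * fderiv ℝ f x (Complex.I • v)) / 2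

def wdbar (p r : ℕ) (f : CSpace p r → ℂ) (x v : CSpace p r) : ℂ :=
  (fderiv ℝ f x v + Complex.I * fderiv ℝ f x (Complex.I • v)) / 2

/-- Euclidean `τ(φ) = 4 Σ ∂²φ/∂z∂z̄ + 4 Σ ∂²φ/∂w∂w̄`. -/
def tauC (p r : ℕ) (f : CSpace p r → ℂ) (x : CSpace p r) : ℂ :=
  (4 : ℂ) * ∑ k : Fin p, ∑ l : Fin p,
      wd p r (fun y => wdbar p r f y (eZ p r k l)) x (eZ p r k l)
    + 4 * ∑ k : Fin r, ∑ l : Fin p,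
      wd p r (fun y => wdbar p r f y (eW p r k l)) x (eW p r k l)

/-- Euclidean conformality operator `κ`. -/
def kapC (p r : ℕ) (f g : CSpace p r → ℂ) (x : CSpace p r) : ℂ :=
  (2 : ℂ) * ∑ k : Fin p, ∑ l : Fin p,
      (wd p r f x (eZ p r k l) * wdbar p r g x (eZ p r k l)
        + wdbar p r f x (eZ p r k l) * wd p r g x (eZ p r k l))
    + 2 * ∑ k : Fin r, ∑ l : Fin p,
      (wd p r f x (eW p r k l) * wdbar p r g x (eW p r k l)
        + wdbar p r f x (eW p r k l) * wd p r g x (eW p r k l))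


/- ---------- auxiliary lemmas ---------- -/

private lemma diffAt_prod {p r : ℕ} {ι : Type*} (f : ι → CSpace p r → ℂ) (x : CSpace p r) :
    ∀ (s : Finset ι), (∀ i ∈ s, DifferentiableAt ℂ (f i) x) →
      DifferentiableAt ℂ (fun y => ∏ i ∈ s, f i y) x := by
  classical
  intro s
  induction s using Finset.induction_on with
  | empty => intro _; simp
  | insert _ _ hni ih =>
      intro h
      simp only [Finset.prod_insert hni]
      exact (h _ (Finset.mem_insert_self _ _)).mul
        (ih fun i hi => h i (Finset.mem_insert_of_mem hi))

private lemma diffAt_det {p r : ℕ} (M : CSpace p r → Matrix (Fin p) (Fin p) ℂ) (x : CSpace p r)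
    (h : ∀ a b, DifferentiableAt ℂ (fun y => M y a b) x) :
    DifferentiableAt ℂ (fun y => (M y).det) x := by
  simp only [Matrix.det_apply']
  exact DifferentiableAt.fun_sum fun σ _ =>
    (differentiableAt_const _).mul (diffAt_prod _ _ _ fun a _ => h _ _)

private lemma diffAt_coord1 {p r : ℕ} (a b : Fin p) (x : CSpace p r) :
    DifferentiableAt ℂ (fun y : CSpace p r => y.1 a b) x := by
  fun_prop

private lemma diffAt_coord2 {p r : ℕ} (a : Fin r) (b : Fin p) (x : CSpace p r) :
    DifferentiableAt ℂ (fun y : CSpace p r => y.2 a b) x := by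
  fun_prop

private lemma keyEq {p r : ℕ} (i : Fin r) (j : Fin p) :
    (fun y : CSpace p r => (Matrix.of y.2 * (Matrix.of y.1)⁻¹) i j)
    = fun y : CSpace p r => ∑ k : Fin p,
        y.2 i k * (((Matrix.of y.1).det)⁻¹ * (Matrix.of y.1).adjugate k j) := by
  funext y
  simp [Matrix.mul_apply, Matrix.inv_def, Matrix.smul_apply, Ring.inverse_eq_inv',
    smul_eq_mul, Matrix.of_apply]

private lemma hdiffF {p r : ℕ} (i : Fin r) (j : Fin p) (y : CSpace p r)
    (hy : (Matrix.of y.1).det ≠ 0) :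
    DifferentiableAt ℂ (fun z : CSpace p r => (Matrix.of z.2 * (Matrix.of z.1)⁻¹) i j) y := by
  rw [keyEq i j]
  refine DifferentiableAt.fun_sum fun k _ => (diffAt_coord2 i k y).mul (DifferentiableAt.mul ?_ ?_)
  · exact (diffAt_det (fun z => Matrix.of z.1) y fun a b => diffAt_coord1 a b y).inv hy
  · simp only [Matrix.adjugate_apply]
    refine diffAt_det _ y fun a b => ?_
    by_cases h : a = j <;>
      simp [Matrix.updateRow_apply, h, diffAt_coord1, differentiableAt_const]

private lemma wdbar_zero {p r : ℕ} (f : CSpace p r → ℂ) (y : CSpace p r)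
    (hf : DifferentiableAt ℂ f y) (v : CSpace p r) : wdbar p r f y v = 0 := by
  rw [wdbar, hf.fderiv_restrictScalars (𝕜 := ℝ)]
  simp only [ContinuousLinearMap.coe_restrictScalars', _root_.map_smul, smul_eq_mul]
  rw [show Complex.I * (Complex.I * (fderiv ℂ f y) v) = -(fderiv ℂ f y v) by
    rw [← mul_assoc, Complex.I_mul_I]; ring]
  ring

private lemma isOpen_dets {p r : ℕ} :
    IsOpen {y : CSpace p r | (Matrix.of y.1).det ≠ 0} := by
  have hc : Continuous fun y : CSpace p r => (Matrix.of y.1).det := by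
    have : Differentiable ℂ fun y : CSpace p r => (Matrix.of y.1).det :=
      fun y => diffAt_det (fun z => Matrix.of z.1) y fun a b => diffAt_coord1 a b y
    exact this.continuous
  exact isOpen_compl_singleton.preimage hc

private lemma wd_wdbar_zero {p r : ℕ} (f : CSpace p r → ℂ)
    (hf : ∀ y : CSpace p r, (Matrix.of y.1).det ≠ 0 → DifferentiableAt ℂ f y)
    (x : CSpace p r) (hx : (Matrix.of x.1).det ≠ 0) (v w : CSpace p r) :
    wd p r (fun y => wdbar p r f y v) x w = 0 := by
  have hev : (fun y => wdbar p r f y v) =ᶠ[nhds x] (fun _ => (0 : ℂ)) := by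
    filter_upwards [isOpen_dets.mem_nhds hx] with y hy
    exact wdbar_zero f y (hf y hy) v
  have h0 : fderiv ℝ (fun y => wdbar p r f y v) x = 0 := by
    rw [hev.fderiv_eq, fderiv_fun_const]; rfl
  simp [wd, h0]

/-- on `V*_{ps}(ℝ) = {det Z ≠ 0}`, the components of `Φ*(X) = W Z⁻¹`
satisfy `τ(φ) = 0` and `κ(φ,ψ) = 0` for any two components. -/
theorem stmt9 (p r : ℕ) (i i' : Fin r) (j j' : Fin p) (x : CSpace p r)
    (hx : (Matrix.of x.1).det ≠ 0) :
    tauC p r (fun y => (Matrix.of y.2 * (Matrix.of y.1)⁻¹) i j) x = 0 ∧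
    kapC p r (fun y => (Matrix.of y.2 * (Matrix.of y.1)⁻¹) i j)
      (fun y => (Matrix.of y.2 * (Matrix.of y.1)⁻¹) i' j') x = 0 := by
  constructor
  · rw [tauC]
    rw [Finset.sum_congr rfl fun k _ => Finset.sum_congr rfl fun l _ =>
      wd_wdbar_zero _ (hdiffF i j) x hx (eZ p r k l) (eZ p r k l)]
    rw [Finset.sum_congr rfl fun k _ => Finset.sum_congr rfl fun l _ =>
      wd_wdbar_zero _ (hdiffF i j) x hx (eW p r k l) (eW p r k l)]
    simp
  · rw [kapC]
    have h1 := fun v => wdbar_zero _ x (hdiffF i j x hx) v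
    have h2 := fun v => wdbar_zero _ x (hdiffF i' j' x hx) v
    simp only [h1, h2, mul_zero, zero_mul, add_zero, Finset.sum_const_zero]


end
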